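/- Let λ(x) = √(x² + m²) for x ≥ 0 and fix k > 0. Then lim_{δ→0⁺} ∫₀^∞ 2δ/(δ² + (λ(x) - λ(k))²) dx = 2π√(k²+m²)/k. -/

import Mathlib

open Real Filter MeasureTheory Set

/-- auxiliary: the density `φ(y) = y/√(y²-m²)` is measurable. -/
lemma stmt6_phi_meas (m : ℝ) : Measurable (fun y : ℝ => y / Real.sqrt (y ^ 2 - m ^ 2)) := by
  exact measurable_id.div ((measurable_id.pow_const 2 |>.sub measurable_const).sqrt)

/-- auxiliary: `φ` is antitone on `[p, ∞)` for `m < p`. -/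
lemma stmt6_phi_anti {m p y : ℝ} (hm : 0 < m) (hmp : m < p) (hpy : p ≤ y) :
    y / Real.sqrt (y ^ 2 - m ^ 2) ≤ p / Real.sqrt (p ^ 2 - m ^ 2) := by
  have hp0 : 0 < p := hm.trans hmp
  have hy0 : 0 < y := hp0.trans_le hpy
  have hp2 : 0 < p ^ 2 - m ^ 2 := by nlinarith
  have hy2 : 0 < y ^ 2 - m ^ 2 := by nlinarith
  have hps : 0 < Real.sqrt (p ^ 2 - m ^ 2) := Real.sqrt_pos.2 hp2
  have hys : 0 < Real.sqrt (y ^ 2 - m ^ 2) := Real.sqrt_pos.2 hy2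
  rw [div_le_div_iff₀ hys hps]
  have h1 : y * Real.sqrt (p ^ 2 - m ^ 2) = Real.sqrt (y ^ 2 * (p ^ 2 - m ^ 2)) := by
    rw [Real.sqrt_mul (sq_nonneg y), Real.sqrt_sq hy0.le]
  have h2 : p * Real.sqrt (y ^ 2 - m ^ 2) = Real.sqrt (p ^ 2 * (y ^ 2 - m ^ 2)) := by
    rw [Real.sqrt_mul (sq_nonneg p), Real.sqrt_sq hp0.le]
  rw [h1, h2]
  apply Real.sqrt_le_sqrt
  have hpy2 : p ^ 2 ≤ y ^ 2 := by nlinarith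
  nlinarith [mul_le_mul_of_nonneg_right hpy2 (sq_nonneg m)]

set_option maxHeartbeats 2000000 in
/-- with `λ(x) = √(x²+m²)` and `k > 0`,
`lim_{δ→0⁺} ∫₀^∞ 2δ/(δ² + (λ(x)-λ(k))²) dx = 2π√(k²+m²)/k`. -/
theorem stmt6 (m k : ℝ) (hm : 0 < m) (hk : 0 < k) :
    Tendsto
      (fun δ : ℝ => ∫ x in Set.Ioi (0 : ℝ),
        2 * δ / (δ ^ 2 + (Real.sqrt (x ^ 2 + m ^ 2) - Real.sqrt (k ^ 2 + m ^ 2)) ^ 2))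
      (nhdsWithin 0 (Set.Ioi 0))
      (nhds (2 * π * Real.sqrt (k ^ 2 + m ^ 2) / k)) := by
  set c : ℝ := Real.sqrt (k ^ 2 + m ^ 2) with hcdef
  have hc2 : c ^ 2 = k ^ 2 + m ^ 2 := Real.sq_sqrt (by positivity)
  have hmc : m < c := by
    nlinarith [Real.sqrt_nonneg (k ^ 2 + m ^ 2)]
  have hc0 : 0 < c := hm.trans hmc
  set p : ℝ := (m + c) / 2 with hpdef
  have hmp : m < p := by simp only [hpdef]; linarith
  have hpc : p < c := by simp only [hpdef]; linarith
  have hp0 : 0 < p := hm.trans hmp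
  set φ : ℝ → ℝ := fun y => y / Real.sqrt (y ^ 2 - m ^ 2) with hφdef
  have hφmeas : Measurable φ := stmt6_phi_meas m
  have hφnonneg : ∀ y, 0 < y → 0 ≤ φ y := fun y hy => by
    exact div_nonneg hy.le (Real.sqrt_nonneg _)
  have hsqpos : ∀ y : ℝ, m < y → 0 < y ^ 2 - m ^ 2 := by
    intro y hy
    nlinarith [mul_pos (sub_pos.2 hy) (by linarith : (0:ℝ) < y + m)]
  have hφc : φ c = c / k := by
    have : c ^ 2 - m ^ 2 = k ^ 2 := by rw [hc2]; ring
    simp only [hφdef, this, Real.sqrt_sq hk.le]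
  -- step 1 : change of variables y = √(x²+m²)
  have step1 : ∀ δ : ℝ,
      (∫ x in Set.Ioi (0 : ℝ),
        2 * δ / (δ ^ 2 + (Real.sqrt (x ^ 2 + m ^ 2) - c) ^ 2))
      = ∫ y in Set.Ioi m, φ y * (2 * δ / (δ ^ 2 + (y - c) ^ 2)) := by
    intro δ
    have himg : (fun y : ℝ => Real.sqrt (y ^ 2 - m ^ 2)) '' Set.Ioi m = Set.Ioi 0 := by
      ext x
      constructor
      · rintro ⟨y, hy, rfl⟩
        exact Real.sqrt_pos.2 (hsqpos _ hy)
      · intro hx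
        refine ⟨Real.sqrt (x ^ 2 + m ^ 2), ?_, ?_⟩
        · have h1 : m ^ 2 < x ^ 2 + m ^ 2 := by nlinarith [Set.mem_Ioi.mp hx]
          have h2 := Real.sqrt_lt_sqrt (by positivity) h1
          rwa [Real.sqrt_sq hm.le] at h2
        · show Real.sqrt (Real.sqrt (x ^ 2 + m ^ 2) ^ 2 - m ^ 2) = x
          rw [Real.sq_sqrt (by positivity)]
          simp only [add_sub_cancel_right]
          exact Real.sqrt_sq (le_of_lt hx)
    have hderiv : ∀ y ∈ Set.Ioi m, HasDerivWithinAt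
        (fun y : ℝ => Real.sqrt (y ^ 2 - m ^ 2)) (φ y) (Set.Ioi m) y := by
      intro y hy
      have hy2 : 0 < y ^ 2 - m ^ 2 := hsqpos _ hy
      have h1 : HasDerivAt (fun y : ℝ => y ^ 2 - m ^ 2) (2 * y) y := by
        simpa using ((hasDerivAt_pow 2 y).sub_const (m ^ 2))
      have h2 := (Real.hasDerivAt_sqrt hy2.ne').comp y h1
      have : 1 / (2 * Real.sqrt (y ^ 2 - m ^ 2)) * (2 * y) = φ y := by
        have hs : Real.sqrt (y ^ 2 - m ^ 2) ≠ 0 := (Real.sqrt_pos.2 hy2).ne'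
        field_simp [hφdef]
        simp only [hφdef]; field_simp
      rw [this] at h2
      exact h2.hasDerivWithinAt
    have hinj : Set.InjOn (fun y : ℝ => Real.sqrt (y ^ 2 - m ^ 2)) (Set.Ioi m) := by
      intro a ha b hb hab
      have ha2 : 0 ≤ a ^ 2 - m ^ 2 := (hsqpos _ ha).le
      have hb2 : 0 ≤ b ^ 2 - m ^ 2 := (hsqpos _ hb).le
      have habsq := congrArg (fun t => t ^ 2) hab
      simp only [Real.sq_sqrt ha2, Real.sq_sqrt hb2] at habsq
      have ha0 : 0 < a := hm.trans ha
      have hb0 : 0 < b := hm.trans hb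
      have h0 : (a - b) * (a + b) = 0 := by nlinarith
      rcases mul_eq_zero.1 h0 with h | h
      · linarith
      · linarith
    have := MeasureTheory.integral_image_eq_integral_abs_deriv_smul
      measurableSet_Ioi hderiv hinj
      (fun x => 2 * δ / (δ ^ 2 + (Real.sqrt (x ^ 2 + m ^ 2) - c) ^ 2))
    rw [himg] at this
    rw [this]
    apply MeasureTheory.setIntegral_congr_fun measurableSet_Ioi
    intro y hy
    have hy2 : 0 ≤ y ^ 2 - m ^ 2 := (hsqpos _ hy).le
    have hsq : Real.sqrt (Real.sqrt (y ^ 2 - m ^ 2) ^ 2 + m ^ 2) = y := by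
      rw [Real.sq_sqrt hy2]
      have : y ^ 2 - m ^ 2 + m ^ 2 = y ^ 2 := by ring
      rw [this, Real.sqrt_sq (hm.trans hy).le]
    simp only [smul_eq_mul, hsq, abs_of_nonneg (hφnonneg y (hm.trans hy))]
  -- derivative fact, reusable
  have hD : ∀ y : ℝ, m < y → HasDerivAt (fun y : ℝ => Real.sqrt (y ^ 2 - m ^ 2)) (φ y) y := by
    intro y hy
    have hy2 : 0 < y ^ 2 - m ^ 2 := hsqpos _ hy
    have h1 : HasDerivAt (fun y : ℝ => y ^ 2 - m ^ 2) (2 * y) y := by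
      simpa using ((hasDerivAt_pow 2 y).sub_const (m ^ 2))
    have h2 := (Real.hasDerivAt_sqrt hy2.ne').comp y h1
    have h3 : 1 / (2 * Real.sqrt (y ^ 2 - m ^ 2)) * (2 * y) = φ y := by
      have hs : Real.sqrt (y ^ 2 - m ^ 2) ≠ 0 := (Real.sqrt_pos.2 hy2).ne'
      field_simp [hφdef]
      simp only [hφdef]; field_simp
    rw [h3] at h2
    exact h2
  -- integrability of φ near m
  have hφint : MeasureTheory.IntegrableOn φ (Set.Ioc m p) := by
    apply intervalIntegral.integrableOn_deriv_of_nonneg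
      (g := fun y : ℝ => Real.sqrt (y ^ 2 - m ^ 2))
    · exact (Real.continuous_sqrt.comp ((continuous_pow 2).sub continuous_const)).continuousOn
    · exact fun y hy => hD y hy.1
    · exact fun y hy => hφnonneg y (hm.trans hy.1)
  -- measurability of the transformed integrand
  have hψmeas : ∀ δ : ℝ, Measurable (fun y => φ y * (2 * δ / (δ ^ 2 + (y - c) ^ 2))) := by
    intro δ
    exact hφmeas.mul (measurable_const.div
      (measurable_const.add ((measurable_id.sub_const c).pow_const 2)))
  -- integrability of the Poisson kernel
  have hPint : ∀ δ : ℝ, 0 < δ → MeasureTheory.Integrable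
      (fun y : ℝ => 2 * δ / (δ ^ 2 + (y - c) ^ 2)) := by
    intro δ hδ
    have h1 : MeasureTheory.Integrable (fun y : ℝ => (1 + (y / δ) ^ 2)⁻¹) :=
      integrable_inv_one_add_sq.comp_div hδ.ne'
    have h2 := (h1.comp_sub_right c).const_mul (2 / δ)
    apply h2.congr
    apply Filter.Eventually.of_forall
    intro y
    have hden : (0:ℝ) < δ ^ 2 + (y - c) ^ 2 := by positivity
    field_simp
  -- integrability on (m, p]
  have hI1 : ∀ δ : ℝ, 0 < δ → MeasureTheory.IntegrableOn
      (fun y => φ y * (2 * δ / (δ ^ 2 + (y - c) ^ 2))) (Set.Ioc m p) := by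
    intro δ hδ
    apply MeasureTheory.Integrable.mono (hφint.const_mul (2 / δ))
      ((hψmeas δ).aestronglyMeasurable.restrict)
    rw [MeasureTheory.ae_restrict_iff' measurableSet_Ioc]
    apply Filter.Eventually.of_forall
    intro y hy
    have hy0 : 0 < y := hm.trans hy.1
    have hφy : 0 ≤ φ y := hφnonneg y hy0
    have hP0 : 0 ≤ 2 * δ / (δ ^ 2 + (y - c) ^ 2) := by positivity
    have hP : 2 * δ / (δ ^ 2 + (y - c) ^ 2) ≤ 2 / δ := by
      rw [div_le_div_iff₀ (by positivity) hδ]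
      nlinarith [sq_nonneg (y - c)]
    rw [Real.norm_eq_abs, Real.norm_eq_abs, abs_of_nonneg (mul_nonneg hφy hP0),
      abs_of_nonneg (mul_nonneg (by positivity) hφy)]
    calc φ y * (2 * δ / (δ ^ 2 + (y - c) ^ 2)) ≤ φ y * (2 / δ) :=
          mul_le_mul_of_nonneg_left hP hφy
      _ = 2 / δ * φ y := mul_comm _ _
  -- integrability on (p, ∞)
  have hI2 : ∀ δ : ℝ, 0 < δ → MeasureTheory.IntegrableOn
      (fun y => φ y * (2 * δ / (δ ^ 2 + (y - c) ^ 2))) (Set.Ioi p) := by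
    intro δ hδ
    apply MeasureTheory.Integrable.mono (((hPint δ hδ).const_mul (φ p)).integrableOn)
      ((hψmeas δ).aestronglyMeasurable.restrict)
    rw [MeasureTheory.ae_restrict_iff' measurableSet_Ioi]
    apply Filter.Eventually.of_forall
    intro y hy
    have hy0 : 0 < y := hp0.trans hy
    have hφy : 0 ≤ φ y := hφnonneg y hy0
    have hP0 : 0 ≤ 2 * δ / (δ ^ 2 + (y - c) ^ 2) := by positivity
    have hφp : φ y ≤ φ p := stmt6_phi_anti hm hmp (le_of_lt hy)
    rw [Real.norm_eq_abs, Real.norm_eq_abs, abs_of_nonneg (mul_nonneg hφy hP0),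
      abs_of_nonneg (mul_nonneg (hφnonneg p hp0) hP0)]
    exact mul_le_mul_of_nonneg_right hφp hP0
  -- splitting the integral at p
  have hsplit : ∀ δ : ℝ, 0 < δ →
      (∫ y in Set.Ioi m, φ y * (2 * δ / (δ ^ 2 + (y - c) ^ 2)))
      = (∫ y in Set.Ioc m p, φ y * (2 * δ / (δ ^ 2 + (y - c) ^ 2)))
        + ∫ y in Set.Ioi p, φ y * (2 * δ / (δ ^ 2 + (y - c) ^ 2)) := by
    intro δ hδ
    rw [← Set.Ioc_union_Ioi_eq_Ioi hmp.le,
      MeasureTheory.setIntegral_union (Set.Ioc_disjoint_Ioi le_rfl) measurableSet_Ioi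
        (hI1 δ hδ) (hI2 δ hδ)]
  -- Part A : the piece near m tends to 0
  have hA : Tendsto (fun δ : ℝ => ∫ y in Set.Ioc m p, φ y * (2 * δ / (δ ^ 2 + (y - c) ^ 2)))
      (nhdsWithin 0 (Set.Ioi 0)) (nhds 0) := by
    have hC : Tendsto (fun δ : ℝ => (∫ y in Set.Ioc m p, φ y) * (2 * δ / (c - p) ^ 2))
        (nhdsWithin 0 (Set.Ioi 0)) (nhds 0) := by
      have hcont : Continuous (fun δ : ℝ =>
          (∫ y in Set.Ioc m p, φ y) * (2 * δ / (c - p) ^ 2)) :=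
        continuous_const.mul ((continuous_const.mul continuous_id).div_const _)
      have h := (hcont.tendsto 0).mono_left (nhdsWithin_le_nhds (s := Set.Ioi (0:ℝ)))
      simpa using h
    apply squeeze_zero' ?_ ?_ hC
    · filter_upwards [self_mem_nhdsWithin] with δ (hδ : δ ∈ Set.Ioi (0:ℝ))
      have hδ0 : (0:ℝ) < δ := hδ
      apply MeasureTheory.setIntegral_nonneg measurableSet_Ioc
      intro y hy
      exact mul_nonneg (hφnonneg y (hm.trans hy.1)) (by positivity)
    · filter_upwards [self_mem_nhdsWithin] with δ (hδ : δ ∈ Set.Ioi (0:ℝ))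
      have hδ0 : 0 < δ := hδ
      calc (∫ y in Set.Ioc m p, φ y * (2 * δ / (δ ^ 2 + (y - c) ^ 2)))
          ≤ ∫ y in Set.Ioc m p, φ y * (2 * δ / (c - p) ^ 2) := by
            apply MeasureTheory.setIntegral_mono_on (hI1 δ hδ0) (hφint.mul_const _)
              measurableSet_Ioc
            intro y hy
            apply mul_le_mul_of_nonneg_left ?_ (hφnonneg y (hm.trans hy.1))
            rw [div_le_div_iff₀ (add_pos_of_pos_of_nonneg (pow_pos hδ0 2) (sq_nonneg _))
              (pow_pos (sub_pos.2 hpc) 2)]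
            have h1 : c - p ≤ c - y := by linarith [hy.2]
            have h2 : (c - p) ^ 2 ≤ (y - c) ^ 2 := by
              nlinarith [mul_self_le_mul_self (by linarith : (0:ℝ) ≤ c - p) h1]
            nlinarith [mul_le_mul_of_nonneg_left h2 (by linarith : (0:ℝ) ≤ 2 * δ),
              mul_nonneg (by linarith : (0:ℝ) ≤ 2 * δ) (sq_nonneg δ)]
        _ = (∫ y in Set.Ioc m p, φ y) * (2 * δ / (c - p) ^ 2) := by
            rw [MeasureTheory.integral_mul_const]
  -- continuity of φ at c
  have hφcont : ContinuousAt φ c := by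
    have hks : Real.sqrt (c ^ 2 - m ^ 2) = k := by
      rw [show c ^ 2 - m ^ 2 = k ^ 2 by rw [hc2]; ring]
      exact Real.sqrt_sq hk.le
    apply ContinuousAt.div continuousAt_id
      (Real.continuous_sqrt.comp ((continuous_pow 2).sub continuous_const)).continuousAt
    show Real.sqrt (c ^ 2 - m ^ 2) ≠ 0
    rw [hks]; exact hk.ne'
  -- Part B : rescaled substitution t = (y - c)/δ
  have hsubB : ∀ δ : ℝ, 0 < δ →
      (∫ y in Set.Ioi p, φ y * (2 * δ / (δ ^ 2 + (y - c) ^ 2)))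
      = ∫ t : ℝ, Set.indicator (Set.Ioi ((p - c) / δ))
          (fun t => 2 / (1 + t ^ 2) * φ (c + δ * t)) t := by
    intro δ hδ
    rw [MeasureTheory.integral_indicator measurableSet_Ioi]
    have himg : (fun t : ℝ => c + δ * t) '' Set.Ioi ((p - c) / δ) = Set.Ioi p := by
      ext y
      constructor
      · rintro ⟨t, ht, rfl⟩
        simp only [Set.mem_Ioi] at ht ⊢
        rw [div_lt_iff₀ hδ] at ht
        nlinarith
      · intro hy
        rw [Set.mem_Ioi] at hy
        refine ⟨(y - c) / δ, ?_, ?_⟩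
        · rw [Set.mem_Ioi, div_lt_div_iff₀ hδ hδ]
          nlinarith [mul_lt_mul_of_pos_right (by linarith : p - c < y - c) hδ]
        · field_simp
          ring
    have hderiv2 : ∀ t ∈ Set.Ioi ((p - c) / δ), HasDerivWithinAt
        (fun t : ℝ => c + δ * t) δ (Set.Ioi ((p - c) / δ)) t := by
      intro t _
      have h := ((hasDerivAt_id t).const_mul δ).const_add c
      simpa using h.hasDerivWithinAt
    have hinj2 : Set.InjOn (fun t : ℝ => c + δ * t) (Set.Ioi ((p - c) / δ)) := by
      intro a _ b _ hab
      simp only at hab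
      have : δ * a = δ * b := by linarith
      exact mul_left_cancel₀ hδ.ne' this
    have hcv := MeasureTheory.integral_image_eq_integral_abs_deriv_smul
      measurableSet_Ioi hderiv2 hinj2
      (fun y => φ y * (2 * δ / (δ ^ 2 + (y - c) ^ 2)))
    rw [himg] at hcv
    rw [hcv]
    apply MeasureTheory.setIntegral_congr_fun measurableSet_Ioi
    intro t _
    simp only [smul_eq_mul, abs_of_pos hδ, add_sub_cancel_left]
    have h1 : δ ^ 2 + (δ * t) ^ 2 = δ ^ 2 * (1 + t ^ 2) := by ring
    have h2 : (0:ℝ) < 1 + t ^ 2 := by positivity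
    rw [h1]
    field_simp
  -- dominated convergence for Part B
  have hB : Tendsto (fun δ : ℝ => ∫ t : ℝ, Set.indicator (Set.Ioi ((p - c) / δ))
        (fun t => 2 / (1 + t ^ 2) * φ (c + δ * t)) t)
      (nhdsWithin 0 (Set.Ioi 0)) (nhds (∫ t : ℝ, 2 / (1 + t ^ 2) * φ c)) := by
    apply MeasureTheory.tendsto_integral_filter_of_dominated_convergence
      (bound := fun t : ℝ => 2 / (1 + t ^ 2) * φ p)
    · filter_upwards [self_mem_nhdsWithin] with δ (hδ : δ ∈ Set.Ioi (0:ℝ))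
      apply Measurable.aestronglyMeasurable
      apply Measurable.indicator ?_ measurableSet_Ioi
      exact (measurable_const.div ((measurable_id.pow_const 2).const_add 1)).mul
        (hφmeas.comp ((measurable_id.const_mul δ).const_add c))
    · filter_upwards [self_mem_nhdsWithin] with δ (hδ : δ ∈ Set.Ioi (0:ℝ))
      have hδ0 : (0:ℝ) < δ := hδ
      apply MeasureTheory.ae_of_all
      intro t
      by_cases ht : t ∈ Set.Ioi ((p - c) / δ)
      · rw [Set.indicator_of_mem ht]
        have hy : p < c + δ * t := by
          rw [Set.mem_Ioi, div_lt_iff₀ hδ0] at ht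
          nlinarith
        have h1 : 0 ≤ φ (c + δ * t) := hφnonneg _ (hp0.trans hy)
        have h2 : φ (c + δ * t) ≤ φ p := stmt6_phi_anti hm hmp hy.le
        have h3 : (0:ℝ) ≤ 2 / (1 + t ^ 2) := by positivity
        rw [Real.norm_eq_abs, abs_of_nonneg (mul_nonneg h3 h1)]
        exact mul_le_mul_of_nonneg_left h2 h3
      · rw [Set.indicator_of_notMem ht]
        rw [norm_zero]
        exact mul_nonneg (by positivity) (hφnonneg p hp0)
    · apply MeasureTheory.Integrable.congr
        ((integrable_inv_one_add_sq.const_mul 2).mul_const (φ p))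
      apply Filter.Eventually.of_forall
      intro t
      simp [div_eq_mul_inv]
    · apply MeasureTheory.ae_of_all
      intro t
      have htend : Tendsto (fun δ : ℝ => 2 / (1 + t ^ 2) * φ (c + δ * t))
          (nhdsWithin 0 (Set.Ioi 0)) (nhds (2 / (1 + t ^ 2) * φ c)) := by
        apply Tendsto.const_mul
        have haff : Tendsto (fun δ : ℝ => c + δ * t) (nhdsWithin 0 (Set.Ioi 0)) (nhds c) := by
          have hcontaff : Continuous (fun δ : ℝ => c + δ * t) :=
            continuous_const.add (continuous_id.mul continuous_const)
          have h := (hcontaff.tendsto 0).mono_left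
            (nhdsWithin_le_nhds (s := Set.Ioi (0:ℝ)))
          simpa using h
        exact hφcont.tendsto.comp haff
      apply Filter.Tendsto.congr' ?_ htend
      have hmem : Set.Ioo (0:ℝ) ((c - p) / (|t| + 1)) ∈ nhdsWithin 0 (Set.Ioi (0:ℝ)) := by
        apply Ioo_mem_nhdsGT_of_mem
        constructor
        · exact le_rfl
        · have : (0:ℝ) < c - p := by linarith
          positivity
      filter_upwards [hmem] with δ hδ
      obtain ⟨hδ0, hδ1⟩ := hδ
      rw [Set.indicator_of_mem]
      rw [Set.mem_Ioi, div_lt_iff₀ hδ0]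
      have h2 : δ * (|t| + 1) < c - p := (lt_div_iff₀ (by positivity)).1 hδ1
      have h3 : -|t| ≤ t := neg_abs_le t
      nlinarith [mul_le_mul_of_nonneg_left h3 hδ0.le]
  -- value of the limit integral
  have hval : (∫ t : ℝ, 2 / (1 + t ^ 2) * φ c) = 2 * π * c / k := by
    have hfn : (fun t : ℝ => 2 / (1 + t ^ 2) * φ c)
        = fun t : ℝ => (2 * φ c) * (1 + t ^ 2)⁻¹ := by
      funext t
      rw [div_eq_mul_inv]
      ring
    rw [hfn, MeasureTheory.integral_const_mul, integral_univ_inv_one_add_sq, hφc]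
    field_simp
  -- assembly
  have heq : (fun δ : ℝ => (∫ y in Set.Ioc m p, φ y * (2 * δ / (δ ^ 2 + (y - c) ^ 2)))
        + ∫ t : ℝ, Set.indicator (Set.Ioi ((p - c) / δ))
          (fun t => 2 / (1 + t ^ 2) * φ (c + δ * t)) t)
      =ᶠ[nhdsWithin 0 (Set.Ioi (0:ℝ))]
      (fun δ : ℝ => ∫ x in Set.Ioi (0 : ℝ),
        2 * δ / (δ ^ 2 + (Real.sqrt (x ^ 2 + m ^ 2) - c) ^ 2)) := by
    filter_upwards [self_mem_nhdsWithin] with δ (hδ : δ ∈ Set.Ioi (0:ℝ))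
    have hδ0 : (0:ℝ) < δ := hδ
    rw [step1 δ, hsplit δ hδ0, hsubB δ hδ0]
  have hfinal := (hA.add hB).congr' heq
  rw [zero_add, hval] at hfinal
  exact hfinal
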